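/- Suppose y solves the Painlevé XXXIV equation y'' = (y')²/(2y) + 4y² + 2xy − (2α)²/(2y) on an interval where y is nonvanishing, and define v = (y' − 2α)/(2y). Then the function w(x) = −2^{−1/3} v(−2^{−1/3} x) satisfies the Painlevé II equation w'' = 2w³ + xw + μ with parameter μ = −(2α + 1/2). -/

import Mathlib

/-- If `y` solves Painlevé XXXIV with parameter `α` and is nowhere vanishing, and
`v = (y' − 2α)/(2y)`, then `w(x) = −2^{−1/3} v(−2^{−1/3} x)` solves Painlevé II
with parameter `μ = −(2α + 1/2)`. -/
theorem PXXXIV_to_PII (α : ℂ) (y : ℂ → ℂ)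
    (hy : Differentiable ℂ y) (hy' : Differentiable ℂ (deriv y))
    (hy0 : ∀ x, y x ≠ 0)
    (hP34 : ∀ x, deriv (deriv y) x
        = (deriv y x)^2 / (2 * y x) + 4 * (y x)^2 + 2 * x * y x
          - (2*α)^2 / (2 * y x))
    (v w : ℂ → ℂ)
    (hv : ∀ x, v x = (deriv y x - 2*α) / (2 * y x))
    (hw : ∀ x, w x = -(2:ℂ)^(-(1:ℂ)/3) * v (-(2:ℂ)^(-(1:ℂ)/3) * x)) :
    ∀ x, deriv (deriv w) x = 2 * (w x)^3 + x * w x + (-(2*α + 1/2)) := by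
  set c : ℂ := -(2:ℂ)^(-(1:ℂ)/3) with hc
  have h2 : (2:ℂ) ≠ 0 := two_ne_zero
  have hc3 : c ^ 3 = -(1/2) := by
    have e : (2:ℂ)^(-(1:ℂ)/3) * (2:ℂ)^(-(1:ℂ)/3) * (2:ℂ)^(-(1:ℂ)/3)
        = (2:ℂ) ^ ((-(1:ℂ)/3) + (-(1:ℂ)/3) + (-(1:ℂ)/3)) := by
      rw [Complex.cpow_add _ _ h2, Complex.cpow_add _ _ h2]
    have e2 : ((-(1:ℂ)/3) + (-(1:ℂ)/3) + (-(1:ℂ)/3)) = -1 := by norm_num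
    rw [e2] at e
    have e3 : (2:ℂ) ^ (-1 : ℂ) = (2:ℂ)⁻¹ := by
      rw [Complex.cpow_neg_one]
    calc c ^ 3 = -((2:ℂ)^(-(1:ℂ)/3) * (2:ℂ)^(-(1:ℂ)/3) * (2:ℂ)^(-(1:ℂ)/3)) := by
          rw [hc]; ring
      _ = -(1/2) := by rw [e, e3]; norm_num
  have hvfun : v = fun t => (deriv y t - 2*α) / (2 * y t) := funext hv
  have hyd : ∀ t, HasDerivAt y (deriv y t) t := fun t => (hy t).hasDerivAt
  have hyd2 : ∀ t, HasDerivAt (deriv y) (deriv (deriv y) t) t := fun t => (hy' t).hasDerivAt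
  -- first order equation for v
  have hvd : ∀ t, HasDerivAt v (-(v t)^2 + t + 2 * y t) t := by
    intro t
    have h1 : HasDerivAt (fun s => deriv y s - 2*α) (deriv (deriv y) t) t :=
      (hyd2 t).sub_const _
    have h2' : HasDerivAt (fun s => 2 * y s) (2 * deriv y t) t := (hyd t).const_mul 2
    have hne : 2 * y t ≠ 0 := mul_ne_zero two_ne_zero (hy0 t)
    have hq := h1.div h2' hne
    simp only [hvfun]
    refine hq.congr_deriv ?_
    rw [hP34 t]
    have h0 := hy0 t
    field_simp
    ring
  have hdv : deriv v = fun t => -(v t)^2 + t + 2 * y t := funext fun t => (hvd t).deriv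
  -- second order equation for v
  have hvd2 : ∀ t, HasDerivAt (deriv v) (2*(v t)^3 - 2*t*(v t) + (4*α+1)) t := by
    intro t
    have ha : HasDerivAt (fun s => -(v s)^2 + s + 2 * y s)
        (-(2 * v t * (-(v t)^2 + t + 2 * y t)) + 1 + 2 * deriv y t) t := by
      have hp : HasDerivAt (fun s => (v s)^2) (2 * v t * (-(v t)^2 + t + 2 * y t)) t := by
        have := (hvd t).pow 2
        refine this.congr_deriv ?_
        norm_num
      exact (hp.neg.add (hasDerivAt_id t)).add ((hyd t).const_mul 2)
    have hy'eq : deriv y t = 2 * y t * v t + 2 * α := by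
      have h := hv t
      have h0 := hy0 t
      field_simp at h
      linear_combination -h
    rw [hdv]
    convert ha using 1
    rw [hy'eq]
    ring
  have hwfun : w = fun t => c * v (c * t) := funext hw
  -- first derivative of w
  have hw1 : ∀ t, HasDerivAt w (c * deriv v (c * t) * c) t := by
    intro t
    have hi : HasDerivAt (fun s : ℂ => c * s) c t := by
      simpa using (hasDerivAt_id t).const_mul c
    have ho : HasDerivAt v (deriv v (c * t)) (c * t) := by
      simp only [hdv]; exact hvd _
    have := (ho.comp t hi).const_mul c
    rw [hwfun]
    refine this.congr_deriv ?_
    ring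
  have hdw : deriv w = fun t => c * deriv v (c * t) * c := funext fun t => (hw1 t).deriv
  -- second derivative of w
  intro x
  have hw2 : HasDerivAt (deriv w)
      ((2*(v (c*x))^3 - 2*(c*x)*(v (c*x)) + (4*α+1)) * c * c * c) x := by
    have hi : HasDerivAt (fun s : ℂ => c * s) c x := by
      simpa using (hasDerivAt_id x).const_mul c
    have ho : HasDerivAt (deriv v) (2*(v (c*x))^3 - 2*(c*x)*(v (c*x)) + (4*α+1)) (c*x) :=
      hvd2 _
    have := ((ho.comp x hi).const_mul c).mul_const c
    rw [hdw]
    refine this.congr_deriv ?_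
    ring
  rw [hw2.deriv, hw x]
  linear_combination (4*α + 1 - 2*c*x*(v (c*x))) * hc3
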